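/- Let Z ∈ ℝ^{d×r} with ‖Z‖_F ≤ √r and M = ZZᵀ, and suppose X ∈ ℝ^{d×r} satisfies ‖XXᵀ − M‖_F = ε with ε ≤ σ_min(Z)²/100. Then there exists U ∈ ℝ^{d×r} with UUᵀ = M and ‖X − U‖_F ≤ 5ε√r/σ_min(Z)². -/

import Mathlib

open Matrix Finset

noncomputable section

/-- Euclidean norm of a finite real vector. -/
def vnorm {n : ℕ} (x : Fin n → ℝ) : ℝ := Real.sqrt (∑ i, (x i) ^ 2)

/-- Frobenius norm of a matrix. -/
def frobNorm {m n : ℕ} (A : Matrix (Fin m) (Fin n) ℝ) : ℝ :=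
  Real.sqrt (∑ i, ∑ j, (A i j) ^ 2)

/-- Smallest singular value, via the variational characterization. -/
def smin {m n : ℕ} (A : Matrix (Fin m) (Fin n) ℝ) : ℝ :=
  sInf {t | ∃ v : Fin n → ℝ, vnorm v = 1 ∧ t = vnorm (A.mulVec v)}

namespace S18

def gsum {n : ℕ} (v : Fin n → ℝ) : ℝ := ∑ i, v i ^ 2
def fsum {m n : ℕ} (A : Matrix (Fin m) (Fin n) ℝ) : ℝ := ∑ i, ∑ j, A i j ^ 2
def ip {m n : ℕ} (A B : Matrix (Fin m) (Fin n) ℝ) : ℝ := ∑ i, ∑ j, A i j * B i j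

variable {m n p : ℕ}

lemma vnorm_eq (v : Fin n → ℝ) : vnorm v = Real.sqrt (gsum v) := rfl
lemma frobNorm_eq (A : Matrix (Fin m) (Fin n) ℝ) : frobNorm A = Real.sqrt (fsum A) := rfl

lemma gsum_nonneg (v : Fin n → ℝ) : 0 ≤ gsum v :=
  Finset.sum_nonneg fun _ _ => sq_nonneg _

lemma fsum_nonneg (A : Matrix (Fin m) (Fin n) ℝ) : 0 ≤ fsum A :=
  Finset.sum_nonneg fun _ _ => Finset.sum_nonneg fun _ _ => sq_nonneg _

lemma gsum_eq_zero_iff {v : Fin n → ℝ} : gsum v = 0 ↔ v = 0 := by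
  constructor
  · intro h
    funext i
    have := (Finset.sum_eq_zero_iff_of_nonneg (fun i _ => sq_nonneg (v i))).mp h i (by simp)
    exact pow_eq_zero_iff two_ne_zero |>.mp this
  · intro h; simp [h, gsum]

lemma gsum_pos {v : Fin n → ℝ} (h : v ≠ 0) : 0 < gsum v :=
  lt_of_le_of_ne (gsum_nonneg v) fun h0 => h (gsum_eq_zero_iff.mp h0.symm)

lemma fsum_eq_zero_iff {A : Matrix (Fin m) (Fin n) ℝ} : fsum A = 0 ↔ A = 0 := by
  constructor
  · intro h
    ext i j
    have hrow := (Finset.sum_eq_zero_iff_of_nonneg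
      (fun i _ => Finset.sum_nonneg fun j _ => sq_nonneg (A i j))).mp h i (by simp)
    have := (Finset.sum_eq_zero_iff_of_nonneg (fun j _ => sq_nonneg (A i j))).mp hrow j (by simp)
    simpa using pow_eq_zero_iff two_ne_zero |>.mp this
  · intro h; simp [h, fsum]

lemma gsum_smul (a : ℝ) (v : Fin n → ℝ) : gsum (a • v) = a ^ 2 * gsum v := by
  simp [gsum, mul_pow, Finset.mul_sum]

lemma fsum_transpose (A : Matrix (Fin m) (Fin n) ℝ) : fsum Aᵀ = fsum A := by
  rw [fsum, fsum, Finset.sum_comm]; rfl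

lemma ip_self (A : Matrix (Fin m) (Fin n) ℝ) : ip A A = fsum A := by
  simp [ip, fsum, sq]

lemma ip_comm (A B : Matrix (Fin m) (Fin n) ℝ) : ip A B = ip B A := by
  simp [ip, mul_comm]

lemma ip_add_left (A B C : Matrix (Fin m) (Fin n) ℝ) :
    ip (A + B) C = ip A C + ip B C := by
  simp [ip, add_mul, Finset.sum_add_distrib]

lemma ip_add_right (A B C : Matrix (Fin m) (Fin n) ℝ) :
    ip A (B + C) = ip A B + ip A C := by
  rw [ip_comm, ip_add_left, ip_comm B A, ip_comm C A]

lemma fsum_add_expand (A B : Matrix (Fin m) (Fin n) ℝ) :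
    fsum (A + B) = fsum A + 2 * ip A B + fsum B := by
  simp only [fsum, ip, Matrix.add_apply, add_sq, Finset.sum_add_distrib, Finset.mul_sum,
    mul_assoc]

lemma fsum_add_of_ip_zero {A B : Matrix (Fin m) (Fin n) ℝ} (h : ip A B = 0) :
    fsum (A + B) = fsum A + fsum B := by
  rw [fsum_add_expand, h]; ring

lemma trace_form (A B : Matrix (Fin m) (Fin n) ℝ) : (Aᵀ * B).trace = ip A B := by
  rw [ip, Finset.sum_comm]
  simp [Matrix.trace, Matrix.diag, Matrix.mul_apply]

lemma fsum_eq_trace (A : Matrix (Fin m) (Fin n) ℝ) : fsum A = (Aᵀ * A).trace := by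
  rw [trace_form, ip_self]

lemma fsum_mul_le (A : Matrix (Fin m) (Fin n) ℝ) (B : Matrix (Fin n) (Fin p) ℝ) :
    fsum (A * B) ≤ fsum A * fsum B := by
  have h1 : fsum (A * B) ≤ ∑ i, ∑ j, (∑ k, A i k ^ 2) * (∑ k, B k j ^ 2) := by
    rw [fsum]
    refine Finset.sum_le_sum fun i _ => Finset.sum_le_sum fun j _ => ?_
    rw [Matrix.mul_apply]
    exact Finset.sum_mul_sq_le_sq_mul_sq _ _ _
  refine h1.trans_eq ?_
  rw [fsum, fsum]
  rw [← Finset.sum_mul_sum]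
  rw [Finset.sum_comm (γ := Fin p)]

lemma gsum_mulVec_le (A : Matrix (Fin m) (Fin n) ℝ) (v : Fin n → ℝ) :
    gsum (A.mulVec v) ≤ fsum A * gsum v := by
  have h1 : gsum (A.mulVec v) ≤ ∑ i, (∑ k, A i k ^ 2) * (∑ k, v k ^ 2) := by
    refine Finset.sum_le_sum fun i _ => ?_
    rw [Matrix.mulVec, dotProduct]
    exact Finset.sum_mul_sq_le_sq_mul_sq _ _ _
  simpa [fsum, gsum, Finset.sum_mul] using h1

lemma ip_le (A B : Matrix (Fin m) (Fin n) ℝ) :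
    ip A B ≤ Real.sqrt (fsum A) * Real.sqrt (fsum B) := by
  have h := Finset.sum_mul_sq_le_sq_mul_sq (Finset.univ : Finset (Fin m × Fin n))
    (fun q => A q.1 q.2) (fun q => B q.1 q.2)
  rw [Fintype.sum_prod_type, Fintype.sum_prod_type, Fintype.sum_prod_type] at h
  have h2 : (ip A B) ^ 2 ≤ fsum A * fsum B := h
  calc ip A B ≤ |ip A B| := le_abs_self _
    _ = Real.sqrt ((ip A B) ^ 2) := (Real.sqrt_sq_eq_abs _).symm
    _ ≤ Real.sqrt (fsum A * fsum B) := Real.sqrt_le_sqrt h2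
    _ = _ := Real.sqrt_mul (fsum_nonneg A) _

lemma sqrt_fsum_add_le (A B : Matrix (Fin m) (Fin n) ℝ) :
    Real.sqrt (fsum (A + B)) ≤ Real.sqrt (fsum A) + Real.sqrt (fsum B) := by
  have h1 : fsum (A + B) ≤ (Real.sqrt (fsum A) + Real.sqrt (fsum B)) ^ 2 := by
    rw [fsum_add_expand, add_sq, Real.sq_sqrt (fsum_nonneg A), Real.sq_sqrt (fsum_nonneg B)]
    have := ip_le A B
    nlinarith
  calc Real.sqrt (fsum (A + B)) ≤ Real.sqrt ((Real.sqrt (fsum A) + Real.sqrt (fsum B)) ^ 2) :=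
        Real.sqrt_le_sqrt h1
    _ = _ := Real.sqrt_sq (by positivity)

lemma quad_abs (M : Matrix (Fin n) (Fin n) ℝ) (v : Fin n → ℝ) :
    |∑ i, ∑ j, v i * M i j * v j| ≤ Real.sqrt (fsum M) * gsum v := by
  have h := Finset.sum_mul_sq_le_sq_mul_sq (Finset.univ : Finset (Fin n × Fin n))
    (fun q => M q.1 q.2) (fun q => v q.1 * v q.2)
  rw [Fintype.sum_prod_type, Fintype.sum_prod_type, Fintype.sum_prod_type] at h
  have e1 : ∑ i, ∑ j, M i j * (v i * v j) = ∑ i, ∑ j, v i * M i j * v j := by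
    congr 1; ext i; congr 1; ext j; ring
  have e2 : ∑ i : Fin n, ∑ j : Fin n, (v i * v j) ^ 2 = gsum v ^ 2 := by
    rw [gsum, sq, Finset.sum_mul_sum]
    refine Finset.sum_congr rfl fun i _ => Finset.sum_congr rfl fun j _ => by ring
  rw [e1, e2] at h
  have hs : |∑ i, ∑ j, v i * M i j * v j| = Real.sqrt ((∑ i, ∑ j, v i * M i j * v j) ^ 2) :=
    (Real.sqrt_sq_eq_abs _).symm
  rw [hs]
  calc Real.sqrt ((∑ i, ∑ j, v i * M i j * v j) ^ 2)
      ≤ Real.sqrt (fsum M * gsum v ^ 2) := Real.sqrt_le_sqrt h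
    _ = Real.sqrt (fsum M) * Real.sqrt (gsum v ^ 2) := Real.sqrt_mul (fsum_nonneg M) _
    _ = Real.sqrt (fsum M) * gsum v := by rw [Real.sqrt_sq (gsum_nonneg v)]

lemma quadform_mul (B : Matrix (Fin m) (Fin n) ℝ) (v : Fin n → ℝ) :
    ∑ i, ∑ j, v i * (Bᵀ * B) i j * v j = gsum (B.mulVec v) := by
  have hmv : ∀ k, (B.mulVec v) k ^ 2 = ∑ i, ∑ j, B k i * v i * (B k j * v j) := by
    intro k
    rw [Matrix.mulVec, dotProduct, sq, Finset.sum_mul_sum]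
  calc ∑ i, ∑ j, v i * (Bᵀ * B) i j * v j
      = ∑ i, ∑ j, ∑ k, B k i * v i * (B k j * v j) := by
        refine Finset.sum_congr rfl fun i _ => Finset.sum_congr rfl fun j _ => ?_
        rw [Matrix.mul_apply]
        simp only [Matrix.transpose_apply, Finset.sum_mul, Finset.mul_sum]
        exact Finset.sum_congr rfl fun k _ => by ring
    _ = ∑ i, ∑ k, ∑ j, B k i * v i * (B k j * v j) := by
        exact Finset.sum_congr rfl fun i _ => Finset.sum_comm
    _ = ∑ k, ∑ i, ∑ j, B k i * v i * (B k j * v j) := Finset.sum_comm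
    _ = gsum (B.mulVec v) := by
        rw [gsum]
        exact Finset.sum_congr rfl fun k _ => (hmv k).symm

lemma quadform_one (v : Fin n → ℝ) :
    ∑ i, ∑ j, v i * (1 : Matrix (Fin n) (Fin n) ℝ) i j * v j = gsum v := by
  simp only [Matrix.one_apply]
  rw [gsum]
  refine Finset.sum_congr rfl fun i _ => ?_
  rw [Finset.sum_eq_single i]
  · simp [sq]
  · intro b _ hb; simp [Ne.symm hb]
  · simp

lemma dot_quadform (M : Matrix (Fin n) (Fin n) ℝ) (v : Fin n → ℝ) :
    dotProduct v (M.mulVec v) = ∑ i, ∑ j, v i * M i j * v j := by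
  simp only [dotProduct, Matrix.mulVec, Finset.mul_sum, mul_assoc]

lemma fsum_mul_left (A : Matrix (Fin m) (Fin n) ℝ) (M : Matrix (Fin n) (Fin p) ℝ) :
    fsum (A * M) = ∑ j, gsum (A.mulVec (fun k => M k j)) := by
  rw [fsum, Finset.sum_comm]
  refine Finset.sum_congr rfl fun j _ => Finset.sum_congr rfl fun i _ => ?_
  rw [Matrix.mul_apply, Matrix.mulVec, dotProduct]

lemma fsum_mul_right (M : Matrix (Fin m) (Fin n) ℝ) (B : Matrix (Fin p) (Fin n) ℝ) :
    fsum (M * Bᵀ) = ∑ i, gsum (B.mulVec (fun k => M i k)) := by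
  rw [fsum]
  refine Finset.sum_congr rfl fun i _ => Finset.sum_congr rfl fun j _ => ?_
  rw [Matrix.mul_apply, Matrix.mulVec, dotProduct]
  simp only [Matrix.transpose_apply]
  refine congrArg (· ^ 2) (Finset.sum_congr rfl fun k _ => mul_comm _ _)

lemma fsum_col_sum (M : Matrix (Fin n) (Fin p) ℝ) :
    fsum M = ∑ j, gsum (fun k => M k j) := by
  rw [fsum, Finset.sum_comm]; rfl

lemma fsum_row_sum (M : Matrix (Fin m) (Fin n) ℝ) :
    fsum M = ∑ i, gsum (fun k => M i k) := rfl

lemma trace_conj_nonneg {R A : Matrix (Fin n) (Fin n) ℝ} (hR : R.PosSemidef) :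
    0 ≤ (Aᵀ * R * A).trace := by
  have l1 : ∀ j, Matrix.diag (Aᵀ * R * A) j = ∑ k, ∑ i, A i j * R i k * A k j := by
    intro j
    rw [Matrix.diag_apply, Matrix.mul_apply]
    refine Finset.sum_congr rfl fun k _ => ?_
    rw [Matrix.mul_apply, Finset.sum_mul]
    exact Finset.sum_congr rfl fun i _ => by rw [Matrix.transpose_apply]
  have l2 : ∀ j, dotProduct (fun i => A i j) (R.mulVec (fun i => A i j))
      = ∑ i, ∑ k, A i j * R i k * A k j := by
    intro j
    rw [dotProduct]
    refine Finset.sum_congr rfl fun i _ => ?_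
    rw [Matrix.mulVec, dotProduct, Finset.mul_sum]
    exact Finset.sum_congr rfl fun k _ => by ring
  have key : (Aᵀ * R * A).trace = ∑ j, dotProduct (fun i => A i j) (R.mulVec (fun i => A i j)) := by
    rw [Matrix.trace]
    refine Finset.sum_congr rfl fun j _ => ?_
    rw [l1 j, l2 j, Finset.sum_comm]
  rw [key]
  refine Finset.sum_nonneg fun j _ => ?_
  have := hR.dotProduct_mulVec_nonneg (fun i => A i j)
  simpa using this

lemma conjT_eq_transpose (A : Matrix (Fin m) (Fin n) ℝ) : Aᴴ = Aᵀ := by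
  ext i j; simp [Matrix.conjTranspose_apply]

lemma herm_of_symm {M : Matrix (Fin n) (Fin n) ℝ} (h : Mᵀ = M) : M.IsHermitian := by
  rw [Matrix.IsHermitian, conjT_eq_transpose, h]

lemma symm_of_herm {M : Matrix (Fin n) (Fin n) ℝ} (h : M.IsHermitian) : Mᵀ = M := by
  rw [← conjT_eq_transpose]; exact h

lemma fsum_orth {Q : Matrix (Fin n) (Fin n) ℝ} (hQ : Qᵀ * Q = 1)
    (M : Matrix (Fin n) (Fin n) ℝ) : fsum (Q * M) = fsum M := by
  rw [fsum_eq_trace, Matrix.transpose_mul, fsum_eq_trace M]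
  congr 1
  rw [Matrix.mul_assoc Mᵀ Qᵀ (Q * M), ← Matrix.mul_assoc Qᵀ Q M, hQ, Matrix.one_mul]

lemma fsum_gram_comm (B : Matrix (Fin n) (Fin n) ℝ) :
    fsum (Bᵀ * B - 1) = fsum (B * Bᵀ - 1) := by
  have hsym1 : (Bᵀ * B - 1)ᵀ = Bᵀ * B - 1 := by
    rw [Matrix.transpose_sub, Matrix.transpose_mul, Matrix.transpose_transpose,
      Matrix.transpose_one]
  have hsym2 : (B * Bᵀ - 1)ᵀ = B * Bᵀ - 1 := by
    rw [Matrix.transpose_sub, Matrix.transpose_mul, Matrix.transpose_transpose,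
      Matrix.transpose_one]
  rw [fsum_eq_trace, fsum_eq_trace, hsym1, hsym2]
  have e1 : (Bᵀ * B - 1) * (Bᵀ * B - 1) = Bᵀ * B * (Bᵀ * B) - Bᵀ * B - Bᵀ * B + 1 := by
    noncomm_ring
  have e2 : (B * Bᵀ - 1) * (B * Bᵀ - 1) = B * Bᵀ * (B * Bᵀ) - B * Bᵀ - B * Bᵀ + 1 := by
    noncomm_ring
  rw [e1, e2]
  simp only [Matrix.trace_add, Matrix.trace_sub]
  have t1 : (Bᵀ * B).trace = (B * Bᵀ).trace := Matrix.trace_mul_comm _ _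
  have t2 : (Bᵀ * B * (Bᵀ * B)).trace = (B * Bᵀ * (B * Bᵀ)).trace := by
    have a1 : Bᵀ * B * (Bᵀ * B) = Bᵀ * (B * (Bᵀ * B)) := by noncomm_ring
    have a2 : B * (Bᵀ * B) * Bᵀ = B * Bᵀ * (B * Bᵀ) := by noncomm_ring
    rw [a1, Matrix.trace_mul_comm, a2]
  rw [t1, t2]

lemma fsum_sqrt_ineq {S : Matrix (Fin n) (Fin n) ℝ} (hS : S.PosSemidef) :
    fsum (S - 1) ≤ fsum (S * S - 1) := by
  have hSsym : Sᵀ = S := symm_of_herm hS.1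
  have h1 : (S - 1)ᵀ = S - 1 := by rw [Matrix.transpose_sub, hSsym, Matrix.transpose_one]
  have h2 : (S * S - 1)ᵀ = S * S - 1 := by
    rw [Matrix.transpose_sub, Matrix.transpose_mul, hSsym, Matrix.transpose_one]
  have hR : (S * S + S + S).PosSemidef := by
    have hs2 : (S * S).PosSemidef := by
      have := Matrix.posSemidef_conjTranspose_mul_self S
      rwa [conjT_eq_transpose, hSsym] at this
    exact (hs2.add hS).add hS
  have key : (S * S - 1)ᵀ * (S * S - 1)
      = (S - 1)ᵀ * (S - 1) + (S - 1)ᵀ * (S * S + S + S) * (S - 1) := by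
    rw [h1, h2]
    noncomm_ring
  rw [fsum_eq_trace, fsum_eq_trace, key, Matrix.trace_add]
  have := trace_conj_nonneg (A := S - 1) hR
  linarith

end S18

open S18

set_option maxHeartbeats 4000000 in
/-- if `‖Z‖_F ≤ √r` and `‖XXᵀ − ZZᵀ‖_F = ε ≤ σ_min(Z)²/100`, then there
is a `U` with `UUᵀ = ZZᵀ` and `‖X − U‖_F ≤ 5ε√r/σ_min(Z)²`. -/
theorem stmt18 (d r : ℕ) (hd : 0 < d) (hr : 0 < r)
    (Z X : Matrix (Fin d) (Fin r) ℝ) (hZF : frobNorm Z ≤ Real.sqrt r)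
    (ε : ℝ) (hε : frobNorm (X * Xᵀ - Z * Zᵀ) = ε) (hεs : ε ≤ smin Z ^ 2 / 100) :
    ∃ U : Matrix (Fin d) (Fin r) ℝ,
      U * Uᵀ = Z * Zᵀ ∧ frobNorm (X - U) ≤ 5 * ε * Real.sqrt r / smin Z ^ 2 := by
  classical
  set σ := smin Z with hσdef
  have hε0 : 0 ≤ ε := hε ▸ Real.sqrt_nonneg _
  -- a unit vector
  have hv0 : vnorm (Pi.single (⟨0, hr⟩ : Fin r) (1:ℝ)) = 1 := by
    rw [vnorm]
    have : ∑ i, (Pi.single (⟨0, hr⟩ : Fin r) (1:ℝ) i) ^ 2 = (1:ℝ) := by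
      rw [Finset.sum_eq_single (⟨0, hr⟩ : Fin r)]
      · simp
      · intro b _ hb; simp [Pi.single_apply, hb]
      · simp
    rw [this, Real.sqrt_one]
  have hbdd : BddBelow {t | ∃ v : Fin r → ℝ, vnorm v = 1 ∧ t = vnorm (Z.mulVec v)} :=
    ⟨0, fun t ⟨v, hv, ht⟩ => ht ▸ Real.sqrt_nonneg _⟩
  have hne : Set.Nonempty {t | ∃ v : Fin r → ℝ, vnorm v = 1 ∧ t = vnorm (Z.mulVec v)} :=
    ⟨_, _, hv0, rfl⟩
  have hσ_nonneg : 0 ≤ σ := le_csInf hne fun t ⟨v, hv, ht⟩ => ht ▸ Real.sqrt_nonneg _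
  have hσ_le : ∀ v : Fin r → ℝ, vnorm v = 1 → σ ≤ vnorm (Z.mulVec v) :=
    fun v hv => csInf_le hbdd ⟨v, hv, rfl⟩
  -- σ ≤ √r
  have hσ_sqrtr : σ ≤ Real.sqrt r := by
    refine (hσ_le _ hv0).trans ?_
    rw [vnorm_eq]
    have h1 : gsum (Z.mulVec (Pi.single (⟨0, hr⟩ : Fin r) (1:ℝ))) ≤ fsum Z := by
      have h2 := gsum_mulVec_le Z (Pi.single (⟨0, hr⟩ : Fin r) (1:ℝ))
      have h3 : gsum (Pi.single (⟨0, hr⟩ : Fin r) (1:ℝ)) = 1 := by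
        have := hv0
        rw [vnorm_eq] at this
        nlinarith [Real.sq_sqrt (gsum_nonneg (Pi.single (⟨0, hr⟩ : Fin r) (1:ℝ)))]
      rw [h3, mul_one] at h2
      exact h2
    exact (Real.sqrt_le_sqrt h1).trans (by rw [← frobNorm_eq]; exact hZF)
  -- lower bound for Z action
  have hZlow : ∀ v : Fin r → ℝ, σ ^ 2 * gsum v ≤ gsum (Z.mulVec v) := by
    intro v
    rcases eq_or_ne (gsum v) 0 with h0 | h0
    · rw [h0, mul_zero]; exact gsum_nonneg _
    have hgpos : 0 < gsum v := lt_of_le_of_ne (gsum_nonneg v) (Ne.symm h0)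
    set c := Real.sqrt (gsum v) with hc
    have hcpos : 0 < c := Real.sqrt_pos.mpr hgpos
    have hc2 : c ^ 2 = gsum v := Real.sq_sqrt (gsum_nonneg v)
    have hu : vnorm (c⁻¹ • v) = 1 := by
      rw [vnorm_eq, gsum_smul]
      rw [show (c⁻¹) ^ 2 * gsum v = 1 by rw [← hc2]; field_simp]
      exact Real.sqrt_one
    have h1 := hσ_le _ hu
    rw [Matrix.mulVec_smul, vnorm_eq, gsum_smul] at h1
    have h2 : σ ^ 2 ≤ (c⁻¹) ^ 2 * gsum (Z.mulVec v) := by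
      have h3 := Real.sq_sqrt (mul_nonneg (sq_nonneg (c⁻¹)) (gsum_nonneg (Z.mulVec v)))
      nlinarith [hσ_nonneg, Real.sqrt_nonneg ((c⁻¹) ^ 2 * gsum (Z.mulVec v))]
    have h4 := mul_le_mul_of_nonneg_right h2 (le_of_lt hgpos)
    calc σ ^ 2 * gsum v ≤ (c⁻¹) ^ 2 * gsum (Z.mulVec v) * gsum v := h4
      _ = gsum (Z.mulVec v) := by
          rw [← hc2]; field_simp
  have hZmul : ∀ {k : ℕ} (M : Matrix (Fin r) (Fin k) ℝ), σ ^ 2 * fsum M ≤ fsum (Z * M) := by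
    intro k M
    rw [fsum_mul_left, fsum_col_sum, Finset.mul_sum]
    exact Finset.sum_le_sum fun j _ => hZlow _
  -- trivial case ε = 0
  rcases eq_or_lt_of_le hε0 with hε0' | hεpos
  · have hfz : fsum (X * Xᵀ - Z * Zᵀ) = 0 := by
      have h1 : Real.sqrt (fsum (X * Xᵀ - Z * Zᵀ)) = 0 := by
        rw [← frobNorm_eq, hε, ← hε0']
      nlinarith [Real.sq_sqrt (fsum_nonneg (X * Xᵀ - Z * Zᵀ)), fsum_nonneg (X * Xᵀ - Z * Zᵀ)]
    have hXX : X * Xᵀ = Z * Zᵀ := sub_eq_zero.mp (fsum_eq_zero_iff.mp hfz)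
    refine ⟨X, hXX, ?_⟩
    rw [sub_self, ← hε0']
    have : frobNorm (0 : Matrix (Fin d) (Fin r) ℝ) = 0 := by
      rw [frobNorm_eq]
      simp [fsum]
    rw [this]
    simp
  -- main case: ε > 0
  have hσ2pos : 0 < σ ^ 2 := by nlinarith
  have hσpos : 0 < σ := lt_of_le_of_ne hσ_nonneg fun h => by
    rw [← h] at hσ2pos; simp at hσ2pos
  have hσne : σ ≠ 0 := ne_of_gt hσpos
  -- Gram matrix
  obtain ⟨G, hGdef⟩ : ∃ G : Matrix (Fin r) (Fin r) ℝ, G = Zᵀ * Z := ⟨_, rfl⟩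
  have hGpd : G.PosDef := by
    rw [hGdef]
    refine Matrix.PosDef.of_dotProduct_mulVec_pos (herm_of_symm (by rw [Matrix.transpose_mul, Matrix.transpose_transpose])) ?_
    intro x hx
    have hst : star x = x := by
      funext i; simp
    rw [hst, dot_quadform, quadform_mul]
    exact lt_of_lt_of_le (mul_pos hσ2pos (gsum_pos hx)) (hZlow x)
  have hGdet : IsUnit G.det := isUnit_iff_ne_zero.mpr (ne_of_gt hGpd.det_pos)
  obtain ⟨B, hBdef⟩ : ∃ B : Matrix (Fin r) (Fin r) ℝ, B = G⁻¹ * (Zᵀ * X) := ⟨_, rfl⟩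
  obtain ⟨N, hNdef⟩ : ∃ N : Matrix (Fin d) (Fin r) ℝ, N = X - Z * B := ⟨_, rfl⟩
  have hZN : Zᵀ * N = 0 := by
    rw [hNdef, Matrix.mul_sub]
    rw [show Zᵀ * (Z * B) = G * B by rw [hGdef, Matrix.mul_assoc]]
    rw [hBdef, ← Matrix.mul_assoc, Matrix.mul_nonsing_inv G hGdet, Matrix.one_mul, sub_self]
    
  have hNZ : Nᵀ * Z = 0 := by
    have := congrArg Matrix.transpose hZN
    rwa [Matrix.transpose_mul, Matrix.transpose_transpose, Matrix.transpose_zero] at this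
  have hX : X = Z * B + N := by rw [hNdef]; abel
  have hsymB : (B * Bᵀ - 1 : Matrix (Fin r) (Fin r) ℝ)ᵀ = B * Bᵀ - 1 := by
    rw [Matrix.transpose_sub, Matrix.transpose_mul, Matrix.transpose_transpose,
      Matrix.transpose_one]
  -- orthogonal decomposition of the residual
  have hdec : X * Xᵀ - Z * Zᵀ =
      (Z * (B * Bᵀ - 1) * Zᵀ + Z * B * Nᵀ) + (N * Bᵀ * Zᵀ + N * Nᵀ) := by
    rw [hX]
    simp only [Matrix.transpose_add, Matrix.transpose_mul]
    simp only [Matrix.mul_sub, Matrix.sub_mul, Matrix.mul_add, Matrix.add_mul,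
        Matrix.mul_one, Matrix.one_mul, Matrix.mul_assoc]; abel
  -- cross terms vanish
  have e12 : ip (Z * (B * Bᵀ - 1) * Zᵀ) (Z * B * Nᵀ) = 0 := by
    rw [← trace_form]
    rw [show (Z * (B * Bᵀ - 1) * Zᵀ)ᵀ * (Z * B * Nᵀ)
        = (Z * ((B * Bᵀ - 1) * (Zᵀ * (Z * B)))) * Nᵀ by
      simp only [Matrix.transpose_mul, Matrix.transpose_transpose, hsymB]
      simp only [Matrix.mul_sub, Matrix.sub_mul, Matrix.mul_add, Matrix.add_mul,
        Matrix.mul_one, Matrix.one_mul, Matrix.mul_assoc]]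
    rw [Matrix.trace_mul_comm, ← Matrix.mul_assoc, hNZ, Matrix.zero_mul, Matrix.trace_zero]
  have e13 : ip (Z * (B * Bᵀ - 1) * Zᵀ) (N * Bᵀ * Zᵀ) = 0 := by
    rw [← trace_form]
    rw [show (Z * (B * Bᵀ - 1) * Zᵀ)ᵀ * (N * Bᵀ * Zᵀ)
        = (Z * (B * Bᵀ - 1)) * ((Zᵀ * N) * (Bᵀ * Zᵀ)) by
      simp only [Matrix.transpose_mul, Matrix.transpose_transpose, hsymB]
      simp only [Matrix.mul_sub, Matrix.sub_mul, Matrix.mul_add, Matrix.add_mul,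
        Matrix.mul_one, Matrix.one_mul, Matrix.mul_assoc]]
    rw [hZN, Matrix.zero_mul, Matrix.mul_zero, Matrix.trace_zero]
  have e14 : ip (Z * (B * Bᵀ - 1) * Zᵀ) (N * Nᵀ) = 0 := by
    rw [← trace_form]
    rw [show (Z * (B * Bᵀ - 1) * Zᵀ)ᵀ * (N * Nᵀ)
        = (Z * (B * Bᵀ - 1)) * ((Zᵀ * N) * Nᵀ) by
      simp only [Matrix.transpose_mul, Matrix.transpose_transpose, hsymB]
      simp only [Matrix.mul_sub, Matrix.sub_mul, Matrix.mul_add, Matrix.add_mul,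
        Matrix.mul_one, Matrix.one_mul, Matrix.mul_assoc]]
    rw [hZN, Matrix.zero_mul, Matrix.mul_zero, Matrix.trace_zero]
  have e23 : ip (Z * B * Nᵀ) (N * Bᵀ * Zᵀ) = 0 := by
    rw [← trace_form]
    rw [show (Z * B * Nᵀ)ᵀ * (N * Bᵀ * Zᵀ)
        = (N * Bᵀ) * ((Zᵀ * N) * (Bᵀ * Zᵀ)) by
      simp only [Matrix.transpose_mul, Matrix.transpose_transpose]
      simp only [Matrix.mul_sub, Matrix.sub_mul, Matrix.mul_add, Matrix.add_mul,
        Matrix.mul_one, Matrix.one_mul, Matrix.mul_assoc]]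
    rw [hZN, Matrix.zero_mul, Matrix.mul_zero, Matrix.trace_zero]
  have e24 : ip (Z * B * Nᵀ) (N * Nᵀ) = 0 := by
    rw [← trace_form]
    rw [show (Z * B * Nᵀ)ᵀ * (N * Nᵀ)
        = (N * Bᵀ) * ((Zᵀ * N) * Nᵀ) by
      simp only [Matrix.transpose_mul, Matrix.transpose_transpose]
      simp only [Matrix.mul_sub, Matrix.sub_mul, Matrix.mul_add, Matrix.add_mul,
        Matrix.mul_one, Matrix.one_mul, Matrix.mul_assoc]]
    rw [hZN, Matrix.zero_mul, Matrix.mul_zero, Matrix.trace_zero]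
  have e34 : ip (N * Bᵀ * Zᵀ) (N * Nᵀ) = 0 := by
    rw [← trace_form]
    rw [show (N * Bᵀ * Zᵀ)ᵀ * (N * Nᵀ)
        = (Z * (B * (Nᵀ * N))) * Nᵀ by
      simp only [Matrix.transpose_mul, Matrix.transpose_transpose]
      simp only [Matrix.mul_sub, Matrix.sub_mul, Matrix.mul_add, Matrix.add_mul,
        Matrix.mul_one, Matrix.one_mul, Matrix.mul_assoc]]
    rw [Matrix.trace_mul_comm, ← Matrix.mul_assoc, hNZ, Matrix.zero_mul, Matrix.trace_zero]
  have hcross : ip (Z * (B * Bᵀ - 1) * Zᵀ + Z * B * Nᵀ) (N * Bᵀ * Zᵀ + N * Nᵀ) = 0 := by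
    rw [ip_add_left, ip_add_right, ip_add_right, e13, e14, e23, e24]; ring
  have hfdelta : fsum (X * Xᵀ - Z * Zᵀ) = ε ^ 2 := by
    have h1 : Real.sqrt (fsum (X * Xᵀ - Z * Zᵀ)) = ε := by rw [← frobNorm_eq]; exact hε
    rw [← h1, Real.sq_sqrt (fsum_nonneg _)]
  have hsplit : fsum (X * Xᵀ - Z * Zᵀ)
      = fsum (Z * (B * Bᵀ - 1) * Zᵀ) + fsum (Z * B * Nᵀ)
        + (fsum (N * Bᵀ * Zᵀ) + fsum (N * Nᵀ)) := by
    rw [hdec, fsum_add_of_ip_zero hcross, fsum_add_of_ip_zero e12, fsum_add_of_ip_zero e34]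
  have hT1 : fsum (Z * (B * Bᵀ - 1) * Zᵀ) ≤ ε ^ 2 := by
    have := fsum_nonneg (Z * B * Nᵀ)
    have := fsum_nonneg (N * Bᵀ * Zᵀ)
    have := fsum_nonneg (N * Nᵀ)
    rw [hfdelta] at hsplit
    linarith
  have hT2 : fsum (Z * B * Nᵀ) ≤ ε ^ 2 := by
    have := fsum_nonneg (Z * (B * Bᵀ - 1) * Zᵀ)
    have := fsum_nonneg (N * Bᵀ * Zᵀ)
    have := fsum_nonneg (N * Nᵀ)
    rw [hfdelta] at hsplit
    linarith
  -- bound on B*Bᵀ - 1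
  have hBBt : fsum (B * Bᵀ - 1) ≤ ε ^ 2 / σ ^ 4 := by
    have s1 : σ ^ 2 * fsum ((B * Bᵀ - 1) * Zᵀ) ≤ fsum (Z * (B * Bᵀ - 1) * Zᵀ) := by
      rw [Matrix.mul_assoc]
      exact hZmul _
    have s2 : fsum ((B * Bᵀ - 1) * Zᵀ) = fsum (Z * (B * Bᵀ - 1)) := by
      rw [← fsum_transpose ((B * Bᵀ - 1) * Zᵀ), Matrix.transpose_mul,
        Matrix.transpose_transpose, hsymB]
    have s3 : σ ^ 2 * fsum (B * Bᵀ - 1) ≤ fsum (Z * (B * Bᵀ - 1)) := hZmul _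
    have s4 : σ ^ 2 * (σ ^ 2 * fsum (B * Bᵀ - 1)) ≤ ε ^ 2 := by
      calc σ ^ 2 * (σ ^ 2 * fsum (B * Bᵀ - 1)) ≤ σ ^ 2 * fsum (Z * (B * Bᵀ - 1)) := by
            exact mul_le_mul_of_nonneg_left s3 (le_of_lt hσ2pos)
        _ = σ ^ 2 * fsum ((B * Bᵀ - 1) * Zᵀ) := by rw [s2]
        _ ≤ fsum (Z * (B * Bᵀ - 1) * Zᵀ) := s1
        _ ≤ ε ^ 2 := hT1
    rw [le_div_iff₀ (by positivity : (0:ℝ) < σ ^ 4)]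
    calc fsum (B * Bᵀ - 1) * σ ^ 4 = σ ^ 2 * (σ ^ 2 * fsum (B * Bᵀ - 1)) := by ring
      _ ≤ ε ^ 2 := s4
  have hBtB : fsum (Bᵀ * B - 1) ≤ ε ^ 2 / σ ^ 4 := by
    rw [fsum_gram_comm]; exact hBBt
  have hsmall : Real.sqrt (fsum (Bᵀ * B - 1)) ≤ 1 / 100 := by
    have h1 : fsum (Bᵀ * B - 1) ≤ 1 / 10000 := by
      have h2 : ε ^ 2 / σ ^ 4 ≤ 1 / 10000 := by
        rw [div_le_div_iff₀ (by positivity) (by norm_num)]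
        calc ε ^ 2 * 10000 ≤ (σ ^ 2 / 100) ^ 2 * 10000 :=
              mul_le_mul_of_nonneg_right (pow_le_pow_left₀ hε0 hεs 2) (by norm_num)
          _ = 1 * σ ^ 4 := by ring
      linarith
    calc Real.sqrt (fsum (Bᵀ * B - 1)) ≤ Real.sqrt (1 / 10000) := Real.sqrt_le_sqrt h1
      _ = 1 / 100 := by
          rw [show (1/10000 : ℝ) = (1/100) ^ 2 by norm_num, Real.sqrt_sq (by norm_num)]
  -- lower bound for B action
  have hBv : ∀ v : Fin r → ℝ, (99 / 100) * gsum v ≤ gsum (B.mulVec v) := by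
    intro v
    have hq : ∑ i, ∑ j, v i * (Bᵀ * B - 1) i j * v j
        = gsum (B.mulVec v) - gsum v := by
      have expand : ∑ i, ∑ j, v i * (Bᵀ * B - 1) i j * v j
          = (∑ i, ∑ j, v i * (Bᵀ * B) i j * v j)
            - ∑ i, ∑ j, v i * (1 : Matrix (Fin r) (Fin r) ℝ) i j * v j := by
        rw [← Finset.sum_sub_distrib]
        refine Finset.sum_congr rfl fun i _ => ?_
        rw [← Finset.sum_sub_distrib]
        refine Finset.sum_congr rfl fun j _ => ?_
        rw [Matrix.sub_apply]; ring
      rw [expand, quadform_mul, quadform_one]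
    have habs := quad_abs (Bᵀ * B - 1) v
    rw [hq] at habs
    have h1 := abs_le.mp habs
    have h2 : Real.sqrt (fsum (Bᵀ * B - 1)) * gsum v ≤ (1 / 100) * gsum v :=
      mul_le_mul_of_nonneg_right hsmall (gsum_nonneg v)
    linarith [h1.1, h2]
  -- bound on N
  have hNfs : fsum N ≤ 4 * ε ^ 2 / σ ^ 2 := by
    have s1 : (99 / 100) * fsum N ≤ fsum (N * Bᵀ) := by
      rw [fsum_mul_right, fsum_row_sum N, Finset.mul_sum]
      exact Finset.sum_le_sum fun i _ => hBv _
    have s2 : fsum (N * Bᵀ) = fsum (B * Nᵀ) := by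
      rw [← fsum_transpose (N * Bᵀ), Matrix.transpose_mul, Matrix.transpose_transpose]
    have s3 : σ ^ 2 * fsum (B * Nᵀ) ≤ fsum (Z * B * Nᵀ) := by
      rw [Matrix.mul_assoc]
      exact hZmul _
    have : σ ^ 2 * ((99 / 100) * fsum N) ≤ ε ^ 2 := by
      calc σ ^ 2 * ((99 / 100) * fsum N) ≤ σ ^ 2 * fsum (N * Bᵀ) :=
            mul_le_mul_of_nonneg_left s1 (le_of_lt hσ2pos)
        _ = σ ^ 2 * fsum (B * Nᵀ) := by rw [s2]
        _ ≤ fsum (Z * B * Nᵀ) := s3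
        _ ≤ ε ^ 2 := hT2
    rw [le_div_iff₀ hσ2pos]
    calc fsum N * σ ^ 2 = (100 / 99) * (σ ^ 2 * ((99 / 100) * fsum N)) := by ring
      _ ≤ (100 / 99) * ε ^ 2 := mul_le_mul_of_nonneg_left this (by norm_num)
      _ ≤ 4 * ε ^ 2 := by nlinarith [sq_nonneg ε]
  -- polar decomposition of B
  have hBtBpd : (Bᵀ * B).PosDef := by
    refine Matrix.PosDef.of_dotProduct_mulVec_pos (herm_of_symm (by rw [Matrix.transpose_mul, Matrix.transpose_transpose])) ?_
    intro x hx
    have hst : star x = x := by funext i; simp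
    rw [hst, dot_quadform, quadform_mul]
    exact lt_of_lt_of_le (mul_pos (by norm_num) (gsum_pos hx)) (hBv x)
  have hpsd := hBtBpd.posSemidef
  open scoped MatrixOrder in obtain ⟨S, hSdef⟩ : ∃ S : Matrix (Fin r) (Fin r) ℝ, S = CFC.sqrt (Bᵀ * B) := ⟨_, rfl⟩
  have hSS : S * S = Bᵀ * B := by rw [hSdef]; open scoped MatrixOrder in exact CFC.sqrt_mul_sqrt_self _ hpsd.nonneg
  have hSpsd : S.PosSemidef := by rw [hSdef]; open scoped MatrixOrder in exact (CFC.sqrt_nonneg _).posSemidef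
  have hSsym : Sᵀ = S := symm_of_herm hSpsd.1
  have hSdet : IsUnit S.det := by
    refine isUnit_iff_ne_zero.mpr fun h0 => ?_
    have : (Bᵀ * B).det = 0 := by rw [← hSS, Matrix.det_mul, h0, mul_zero]
    exact (ne_of_gt hBtBpd.det_pos) this
  obtain ⟨Q, hQdef⟩ : ∃ Q : Matrix (Fin r) (Fin r) ℝ, Q = B * S⁻¹ := ⟨_, rfl⟩
  have hQorth : Qᵀ * Q = 1 := by
    rw [hQdef, Matrix.transpose_mul, Matrix.transpose_nonsing_inv, hSsym]
    rw [Matrix.mul_assoc, ← Matrix.mul_assoc Bᵀ B S⁻¹, ← hSS]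
    rw [Matrix.mul_assoc S S S⁻¹, Matrix.mul_nonsing_inv S hSdet, Matrix.mul_one,
      Matrix.nonsing_inv_mul S hSdet]
  have hQQt : Q * Qᵀ = 1 := mul_eq_one_comm.mp hQorth
  have hBQS : B = Q * S := by
    rw [hQdef, Matrix.mul_assoc, Matrix.nonsing_inv_mul S hSdet, Matrix.mul_one]
  have hBQ : fsum (B - Q) ≤ ε ^ 2 / σ ^ 4 := by
    have h1 : B - Q = Q * (S - 1) := by
      rw [Matrix.mul_sub, Matrix.mul_one, ← hBQS]
    rw [h1, fsum_orth hQorth]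
    calc fsum (S - 1) ≤ fsum (S * S - 1) := fsum_sqrt_ineq hSpsd
      _ = fsum (Bᵀ * B - 1) := by rw [hSS]
      _ ≤ ε ^ 2 / σ ^ 4 := hBtB
  -- the orthogonal matrix U
  refine ⟨Z * Q, ?_, ?_⟩
  · rw [Matrix.transpose_mul, Matrix.mul_assoc, ← Matrix.mul_assoc Q Qᵀ Zᵀ, hQQt,
      Matrix.one_mul]
  · have hXU : X - Z * Q = N + Z * (B - Q) := by
      rw [hX, Matrix.mul_sub]; abel
    rw [hXU, frobNorm_eq]
    have htri := sqrt_fsum_add_le N (Z * (B - Q))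
    have hNb : Real.sqrt (fsum N) ≤ 2 * ε / σ := by
      calc Real.sqrt (fsum N) ≤ Real.sqrt (4 * ε ^ 2 / σ ^ 2) := Real.sqrt_le_sqrt hNfs
        _ = 2 * ε / σ := by
            rw [show 4 * ε ^ 2 / σ ^ 2 = (2 * ε / σ) ^ 2 by field_simp; ring]
            exact Real.sqrt_sq (by positivity)
    have hZBQb : Real.sqrt (fsum (Z * (B - Q))) ≤ Real.sqrt r * (ε / σ ^ 2) := by
      have h1 : fsum (Z * (B - Q)) ≤ fsum Z * fsum (B - Q) := fsum_mul_le _ _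
      calc Real.sqrt (fsum (Z * (B - Q)))
          ≤ Real.sqrt (fsum Z * fsum (B - Q)) := Real.sqrt_le_sqrt h1
        _ = Real.sqrt (fsum Z) * Real.sqrt (fsum (B - Q)) := Real.sqrt_mul (fsum_nonneg Z) _
        _ ≤ Real.sqrt r * (ε / σ ^ 2) := by
            refine mul_le_mul ?_ ?_ (Real.sqrt_nonneg _) (Real.sqrt_nonneg _)
            · rw [← frobNorm_eq]; exact hZF
            · calc Real.sqrt (fsum (B - Q)) ≤ Real.sqrt (ε ^ 2 / σ ^ 4) :=
                    Real.sqrt_le_sqrt hBQ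
                _ = ε / σ ^ 2 := by
                    rw [show ε ^ 2 / σ ^ 4 = (ε / σ ^ 2) ^ 2 by field_simp]
                    exact Real.sqrt_sq (by positivity)
    have hfinal : 2 * ε / σ + Real.sqrt r * (ε / σ ^ 2) ≤ 5 * ε * Real.sqrt r / σ ^ 2 := by
      have h1 : 2 * ε / σ ≤ 2 * ε * Real.sqrt r / σ ^ 2 := by
        rw [show 2 * ε / σ = 2 * ε * σ / σ ^ 2 by field_simp]
        exact (div_le_div_iff_of_pos_right hσ2pos).mpr
          (mul_le_mul_of_nonneg_left hσ_sqrtr (by linarith : (0:ℝ) ≤ 2 * ε))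
      have h2 : Real.sqrt r * (ε / σ ^ 2) = ε * Real.sqrt r / σ ^ 2 := by ring
      calc 2 * ε / σ + Real.sqrt r * (ε / σ ^ 2)
          ≤ 2 * ε * Real.sqrt r / σ ^ 2 + ε * Real.sqrt r / σ ^ 2 :=
            add_le_add h1 (le_of_eq h2)
        _ = 3 * ε * Real.sqrt r / σ ^ 2 := by ring
        _ ≤ 5 * ε * Real.sqrt r / σ ^ 2 :=
            (div_le_div_iff_of_pos_right hσ2pos).mpr
              (mul_le_mul_of_nonneg_right (by linarith : 3 * ε ≤ 5 * ε) (Real.sqrt_nonneg (r:ℝ)))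
    calc Real.sqrt (fsum (N + Z * (B - Q)))
        ≤ Real.sqrt (fsum N) + Real.sqrt (fsum (Z * (B - Q))) := htri
      _ ≤ 2 * ε / σ + Real.sqrt r * (ε / σ ^ 2) := add_le_add hNb hZBQb
      _ ≤ 5 * ε * Real.sqrt r / σ ^ 2 := hfinal
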